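/- Let X be a strictly convex real normed space and x₁, x₂ ∈ S_X. If F(x₁, 0) = F(x₂, 0), then x₁ = x₂ or x₁ = −x₂. -/

import Mathlib

theorem F_zero_unique_strictly_convex {X : Type*} [NormedAddCommGroup X] [NormedSpace ℝ X]
    [StrictConvexSpace ℝ X]
    (x₁ x₂ : X) (hx₁ : ‖x₁‖ = 1) (hx₂ : ‖x₂‖ = 1)
    (hF : {y : X | ∀ l : ℝ, ‖x₁ + l • y‖ ≥ ‖x₁‖} =
        {y : X | ∀ l : ℝ, ‖x₂ + l • y‖ ≥ ‖x₂‖}) :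
    x₁ = x₂ ∨ x₁ = -x₂ := by
  have hx₁0 : x₁ ≠ 0 := by intro h; rw [h, norm_zero] at hx₁; norm_num at hx₁
  obtain ⟨f, hf1, hfx⟩ := exists_dual_vector ℝ x₁ (norm_ne_zero_iff.mpr hx₁0)
  rw [hx₁] at hfx
  set c : ℝ := f x₂ with hc
  set y : X := x₂ - c • x₁ with hy
  have hfy : f y = 0 := by
    simp [hy, hc, map_sub, map_smul, hfx]
  have hy₁ : ∀ l : ℝ, ‖x₁ + l • y‖ ≥ 1 := by
    intro l
    have h1 : f (x₁ + l • y) = 1 := by simp [map_add, map_smul, hfx, hfy]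
    have h2 : |f (x₁ + l • y)| ≤ ‖f‖ * ‖x₁ + l • y‖ := f.le_opNorm _
    rw [h1, hf1, one_mul] at h2
    calc (1 : ℝ) ≤ |1| := by norm_num
    _ ≤ _ := by rw [← h1] at h2 ⊢; rw [h1] at h2 ⊢; exact h2
  have hmem : y ∈ {y : X | ∀ l : ℝ, ‖x₁ + l • y‖ ≥ ‖x₁‖} := by
    intro l; rw [hx₁]; exact hy₁ l
  have hy₂ : ∀ l : ℝ, ‖x₂ + l • y‖ ≥ 1 := by
    have := hF ▸ hmem
    intro l; have h := this l; rwa [hx₂] at h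
  have hx₂eq : x₂ = c • x₁ + y := by rw [hy]; abel
  by_cases hy0 : y = 0
  · -- x₂ = c • x₁, |c| = 1
    rw [hy0, add_zero] at hx₂eq
    have : |c| = 1 := by
      have := hx₂
      rw [hx₂eq, norm_smul, hx₁, mul_one, Real.norm_eq_abs] at this
      exact this
    rcases abs_eq (by norm_num : (0:ℝ) ≤ 1) |>.mp this with h | h
    · left; rw [hx₂eq, h, one_smul]
    · right; rw [hx₂eq, h, neg_smul, one_smul, neg_neg]
  · have hc0 : c ≠ 0 := by
      intro h
      have := hy₂ (-1)
      rw [hx₂eq, h, zero_smul, zero_add, neg_one_smul, add_neg_cancel, norm_zero] at this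
      linarith
    -- |c| ≥ 1 from hy₂ (-1): ‖x₂ - y‖ = |c|
    have hcge : |c| ≥ 1 := by
      have := hy₂ (-1)
      have h2 : x₂ + (-1 : ℝ) • y = c • x₁ := by rw [hx₂eq]; module
      rw [h2, norm_smul, hx₁, mul_one, Real.norm_eq_abs] at this
      exact this
    -- |c| ≤ 1 since |f x₂| ≤ ‖x₂‖ = 1
    have hcle : |c| ≤ 1 := by
      have h2 : |f x₂| ≤ ‖f‖ * ‖x₂‖ := f.le_opNorm _
      rwa [hf1, hx₂, one_mul] at h2
    have hcabs : |c| = 1 := le_antisymm hcle hcge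
    rcases abs_eq (by norm_num : (0:ℝ) ≤ 1) |>.mp hcabs with h1 | h1
    · -- c = 1 : x₂ = x₁ + y, show x₁ = x₂
      left
      have hsum : ‖x₁ + x₂‖ ≥ 2 := by
        have := hy₁ (1/2)
        have h2 : x₁ + x₂ = (2 : ℝ) • (x₁ + (1/2 : ℝ) • y) := by
          rw [hx₂eq, h1, one_smul]; module
        rw [h2, norm_smul]
        simp only [Real.norm_ofNat]
        linarith
      have hle : ‖x₁ + x₂‖ ≤ 2 := by
        calc ‖x₁ + x₂‖ ≤ ‖x₁‖ + ‖x₂‖ := norm_add_le _ _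
        _ = 2 := by rw [hx₁, hx₂]; norm_num
      exact eq_of_norm_eq_of_norm_add_eq (hx₁.trans hx₂.symm)
        (by rw [hx₁, hx₂]; linarith)
    · -- c = -1 : x₂ = -x₁ + y, show x₁ = -x₂
      right
      have hsum : ‖x₁ + -x₂‖ ≥ 2 := by
        have := hy₁ (-(1/2))
        have h2 : x₁ + -x₂ = (2 : ℝ) • (x₁ + (-(1/2) : ℝ) • y) := by
          rw [hx₂eq, h1]; module
        rw [h2, norm_smul]
        simp only [Real.norm_ofNat]
        linarith
      have h3 : ‖(-x₂ : X)‖ = 1 := by rw [norm_neg, hx₂]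
      have hle : ‖x₁ + -x₂‖ ≤ 2 := by
        calc ‖x₁ + -x₂‖ ≤ ‖x₁‖ + ‖(-x₂ : X)‖ := norm_add_le _ _
        _ = 2 := by rw [hx₁, h3]; norm_num
      exact eq_of_norm_eq_of_norm_add_eq (hx₁.trans h3.symm)
        (by rw [hx₁, h3]; linarith)
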